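/- Let p be a prime, let S ⊆ 𝔽_p × 𝔽_p be a set of n points with n < p, and let α ∈ 𝔽_p \ {0}. Define Δ_α = {α·a + b : (a,b) ∈ S} and Q = {(a_i − a_j)/(b_i − b_j) : (a_i,b_i), (a_j,b_j) ∈ S, b_i ≠ b_j}. If S is not collinear, i.e., there are no elements m, β ∈ 𝔽_p such that m·a + β = b for all (a,b) ∈ S, then |Q| ≥ |S| − |Δ_α| + 1. -/

import Mathlib

open Polynomial

namespace SvD

variable {K : Type*} [Field K]

/-- weighted degree bound: every monomial `q^i x^j` has `i + j ≤ W`. -/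
def Wt (W : ℕ) (F : K[X][X]) : Prop :=
  ∀ j, F.coeff j ≠ 0 → (F.coeff j).natDegree + j ≤ W

lemma Wt.mono {W W' : ℕ} (h : W ≤ W') {F : K[X][X]} (hF : Wt W F) : Wt W' F :=
  fun j hj => (hF j hj).trans h

lemma wt_sub {W : ℕ} {F G : K[X][X]} (hF : Wt W F) (hG : Wt W G) : Wt W (F - G) := by
  intro j hj
  rw [coeff_sub] at hj ⊢
  rcases eq_or_ne (F.coeff j) 0 with h1 | h1
  · rw [h1, zero_sub, natDegree_neg]
    exact hG j (by intro h; apply hj; rw [h1, h, sub_zero])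
  rcases eq_or_ne (G.coeff j) 0 with h2 | h2
  · rw [h2, sub_zero]; exact hF j h1
  calc (F.coeff j - G.coeff j).natDegree + j
      ≤ max (F.coeff j).natDegree (G.coeff j).natDegree + j := by
        exact Nat.add_le_add_right (natDegree_sub_le _ _) j
    _ ≤ W := by
        rcases max_cases (F.coeff j).natDegree (G.coeff j).natDegree with ⟨h, _⟩ | ⟨h, _⟩
        · rw [h]; exact hF j h1
        · rw [h]; exact hG j h2

lemma wt_mul {W₁ W₂ : ℕ} {F G : K[X][X]} (hF : Wt W₁ F) (hG : Wt W₂ G) :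
    Wt (W₁ + W₂) (F * G) := by
  intro j hj
  rw [coeff_mul] at hj ⊢
  have hj' : j ≤ W₁ + W₂ := by
    obtain ⟨uv, huv, hne⟩ := Finset.exists_ne_zero_of_sum_ne_zero hj
    have h1 : F.coeff uv.1 ≠ 0 := fun h => hne (by rw [h, zero_mul])
    have h2 : G.coeff uv.2 ≠ 0 := fun h => hne (by rw [h, mul_zero])
    have := Finset.HasAntidiagonal.mem_antidiagonal.mp huv
    calc j = uv.1 + uv.2 := this.symm
      _ ≤ W₁ + W₂ := add_le_add (le_trans (Nat.le_add_left _ _) (hF _ h1))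
          (le_trans (Nat.le_add_left _ _) (hG _ h2))
  have hdeg : (∑ x ∈ Finset.HasAntidiagonal.antidiagonal j, F.coeff x.1 * G.coeff x.2).natDegree
      ≤ W₁ + W₂ - j := by
    apply Polynomial.natDegree_sum_le_of_forall_le
    intro uv huv
    rcases eq_or_ne (F.coeff uv.1) 0 with h1 | h1
    · simp [h1]
    rcases eq_or_ne (G.coeff uv.2) 0 with h2 | h2
    · simp [h2]
    have huv' := Finset.HasAntidiagonal.mem_antidiagonal.mp huv
    have := add_le_add (hF _ h1) (hG _ h2)
    refine le_trans (natDegree_mul_le) (Nat.le_sub_of_add_le ?_)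
    omega
  omega

lemma wt_monomial {w k : ℕ} {c : K[X]} (hc : c.natDegree ≤ w) :
    Wt (w + k) (C c * X ^ k : K[X][X]) := by
  intro j hj
  rw [C_mul_X_pow_eq_monomial, coeff_monomial] at hj ⊢
  rcases eq_or_ne k j with h | h
  · rw [if_pos h]; omega
  · rw [if_neg h] at hj; exact absurd rfl hj

lemma wt_one : Wt 0 (1 : K[X][X]) := by
  intro j hj
  rcases eq_or_ne j 0 with h | h
  · subst h; simp
  · simp [coeff_one, h] at hj

lemma wt_prod {ι : Type*} (s : Finset ι) (f : ι → K[X][X]) (hf : ∀ i ∈ s, Wt 1 (f i)) :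
    Wt s.card (∏ i ∈ s, f i) := by
  induction s using Finset.cons_induction with
  | empty => simpa using wt_one
  | cons a s ha ih =>
      rw [Finset.prod_cons, Finset.card_cons]
      have := wt_mul (hf a (Finset.mem_cons_self a s))
        (ih fun i hi => hf i (Finset.mem_cons_of_mem hi))
      rwa [add_comm 1 s.card] at this

/-- Division with weight control. -/
lemma wt_div (f : K[X][X]) (n : ℕ) (hf : f.Monic) (hfn : f.natDegree = n) (hn1 : 1 ≤ n)
    (hwf : Wt n f) (W : ℕ) :
    ∀ D (d : K[X][X]), d.natDegree ≤ D → Wt W d →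
      ∃ g r : K[X][X], d = f * g + r ∧ r.natDegree < n ∧ Wt W r := by
  intro D
  induction D with
  | zero =>
      intro d hd hw
      exact ⟨0, d, by ring, by omega, hw⟩
  | succ D ih =>
      intro d hd hw
      by_cases hlt : d.natDegree < n
      · exact ⟨0, d, by ring, hlt, hw⟩
      push_neg at hlt
      have hd0 : d ≠ 0 := by
        intro h; rw [h, natDegree_zero] at hlt; omega
      set c : K[X] := d.leadingCoeff with hc
      have hc0 : c ≠ 0 := leadingCoeff_ne_zero.mpr hd0
      set u : K[X][X] := C c * X ^ (d.natDegree - n) with hu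
      have hu0 : u ≠ 0 := mul_ne_zero (by simpa using hc0) (pow_ne_zero _ X_ne_zero)
      have hf0 : f ≠ 0 := hf.ne_zero
      have hknn : d.natDegree - n + n = d.natDegree := Nat.sub_add_cancel hlt
      have hum : u = monomial (d.natDegree - n) c := C_mul_X_pow_eq_monomial
      have hdeg : (u * f).degree = d.degree := by
        rw [degree_mul, degree_C_mul_X_pow _ hc0, degree_eq_natDegree hf.ne_zero, hfn,
          degree_eq_natDegree hd0, ← Nat.cast_add, hknn]
      have hlc : d.leadingCoeff = (u * f).leadingCoeff := by
        rw [leadingCoeff_mul, hum, leadingCoeff_monomial, hf.leadingCoeff, mul_one]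
      have hsub : (d - u * f).degree < d.degree := degree_sub_lt hdeg.symm hd0 hlc
      set d' : K[X][X] := d - u * f with hd'
      have hd'D : d'.natDegree ≤ D := by
        rcases eq_or_ne d' 0 with h | h
        · rw [h, natDegree_zero]; omega
        · have := natDegree_lt_natDegree h hsub
          omega
      have hwd' : Wt W d' := by
        apply wt_sub hw
        have h1 : c.natDegree + d.natDegree ≤ W := by
          have h2 := hw d.natDegree (show d.coeff d.natDegree ≠ 0 by
            rwa [coeff_natDegree, ← hc])
          rwa [coeff_natDegree, ← hc] at h2
        have hmm := wt_mul (wt_monomial (k := d.natDegree - n) (le_refl c.natDegree)) hwf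
        rw [hu]
        refine Wt.mono ?_ hmm
        omega
      obtain ⟨g', r', hgr, hrn, hwr⟩ := ih d' hd'D hwd'
      refine ⟨u + g', r', ?_, hrn, hwr⟩
      have : d - u * f = f * g' + r' := hgr
      linear_combination this

lemma wt_factor {y : K[X]} (hy : y.natDegree ≤ 1) : Wt 1 (X - C y : K[X][X]) := by
  intro j hj
  match j with
  | 0 =>
      rw [coeff_sub, coeff_X_zero, coeff_C, if_pos rfl, zero_sub, natDegree_neg]
      omega
  | 1 =>
      rw [coeff_sub, coeff_X_one, coeff_C, if_neg one_ne_zero, sub_zero, natDegree_one]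
  | (j+2) =>
      exfalso; apply hj
      rw [coeff_sub, coeff_C, if_neg (by omega), coeff_X, if_neg (by omega), sub_zero]

lemma pow_sub_one_dvd_derivative {δ : K} {k : ℕ} {P : K[X]}
    (h : (X - C δ) ^ k ∣ P) : (X - C δ) ^ (k - 1) ∣ derivative P := by
  obtain ⟨u, rfl⟩ := h
  rw [derivative_mul, derivative_pow, derivative_sub, derivative_X, derivative_C, sub_zero,
    mul_one]
  refine dvd_add (Dvd.dvd.mul_right ?_ u) (Dvd.dvd.mul_right (pow_dvd_pow _ (Nat.sub_le k 1)) _)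
  exact dvd_mul_left _ _

variable {p : ℕ} [Fact p.Prime]

lemma prod_lin_dvd (S : Finset (ZMod p × ZMod p)) (Q : Finset (ZMod p))
    (hQ : ∀ P ∈ S, ∀ P' ∈ S, P.2 ≠ P'.2 → (P.1 - P'.1) / (P.2 - P'.2) ∈ Q)
    (q : ZMod p) (hq : q ∉ Q) :
    (∏ P ∈ S, (X - C (P.1 - q * P.2)) : (ZMod p)[X]) ∣ X ^ p - X := by
  have hinj : ∀ P ∈ S, ∀ P' ∈ S, P.1 - q * P.2 = P'.1 - q * P'.2 → P = P' := by
    intro P hP P' hP' h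
    rcases eq_or_ne P.2 P'.2 with h2 | h2
    · have : P.1 = P'.1 := by rw [h2] at h; linear_combination h
      exact Prod.ext this h2
    · exfalso
      apply hq
      have hsub : P.2 - P'.2 ≠ 0 := sub_ne_zero.mpr h2
      have : (P.1 - P'.1) / (P.2 - P'.2) = q := by
        rw [div_eq_iff hsub]; linear_combination h
      rw [← this]
      exact hQ P hP P' hP' h2
  rw [← Finset.prod_attach S (fun P => (X - C (P.1 - q * P.2)) : _ → (ZMod p)[X])]
  apply Fintype.prod_dvd_of_coprime
  · apply Polynomial.pairwise_coprime_X_sub_C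
    intro P P' h
    exact Subtype.ext (hinj _ P.2 _ P'.2 h)
  · intro P
    rw [dvd_iff_isRoot]
    simp [IsRoot, ZMod.pow_card]

lemma key (S : Finset (ZMod p × ZMod p)) (hnp : S.card < p) (γ : ZMod p)
    (Q : Finset (ZMod p))
    (hQ : ∀ P ∈ S, ∀ P' ∈ S, P.2 ≠ P'.2 → (P.1 - P'.1) / (P.2 - P'.2) ∈ Q)
    (hm2 : 2 ≤ (S.image fun P => P.1 + γ * P.2).card)
    (hlt : (S.image fun P => P.1 + γ * P.2).card < S.card) :
    S.card - (S.image fun P => P.1 + γ * P.2).card + 1 ≤ Q.card := by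
  by_contra hcon
  push_neg at hcon
  set c : ZMod p × ZMod p → ZMod p := fun P => P.1 + γ * P.2 with hc
  set n := S.card with hn
  set Δ : Finset (ZMod p) := S.image c with hΔ
  set m := Δ.card with hm
  set t := n - m with ht
  have hp2 : 2 ≤ p := (Fact.out : p.Prime).two_le
  have ht1 : 1 ≤ t := by omega
  have htp : t < p := by omega
  have hn1 : 1 ≤ n := by omega
  have hQt : Q.card ≤ t := by omega
  -- the two-variable polynomial f
  set f : (ZMod p)[X][X] := ∏ P ∈ S, (X - C (C P.1 - X * C P.2)) with hf
  have hfm : f.Monic := monic_prod_of_monic _ _ (fun P _ => monic_X_sub_C _)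
  have hfdeg : f.natDegree = n := by
    rw [hf, natDegree_prod _ _ (fun P _ => (monic_X_sub_C _).ne_zero),
      Finset.sum_congr rfl (fun P _ => natDegree_X_sub_C _)]
    simp [hn]
  have hwf : Wt n f := by
    rw [hf, hn]
    apply wt_prod
    intro P _
    apply wt_factor
    refine le_trans (natDegree_sub_le _ _) ?_
    simp only [natDegree_C]
    refine max_le (by omega) (le_trans natDegree_mul_le ?_)
    simp [natDegree_X]
  -- the dividend
  set d : (ZMod p)[X][X] := X ^ p - X with hd
  have hddeg : d.natDegree ≤ p := by
    refine le_trans (natDegree_sub_le _ _) ?_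
    simp only [natDegree_X_pow, natDegree_X]
    omega
  have hwd : Wt p d := by
    intro j hj
    have hcoeff : d.coeff j = (if j = p then 1 else 0) - (if j = 1 then 1 else 0) := by
      rw [hd, coeff_sub, coeff_X_pow, coeff_X]
      congr 1
      by_cases h1 : j = 1
      · simp [h1]
      · rw [if_neg (fun h => h1 h.symm), if_neg h1]
    by_cases h1 : j = 1
    · rw [hcoeff, if_neg (by omega), if_pos h1, zero_sub, natDegree_neg, natDegree_one]
      omega
    by_cases hP : j = p
    · rw [hcoeff, if_pos hP, if_neg h1, sub_zero, natDegree_one]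
      omega
    · exfalso; apply hj; rw [hcoeff, if_neg hP, if_neg h1, sub_zero]
  obtain ⟨g, r, hdiv, hrdeg, hwr⟩ := wt_div f n hfm hfdeg hn1 hwf p p d hddeg hwd
  -- vanishing of high coefficients of r
  have hvanish : ∀ j, t < j → r.coeff j = 0 := by
    intro j hj
    by_contra hne
    set N : Finset (ZMod p) := Finset.univ \ Q with hN
    have hNcard : p - t ≤ N.card := by
      rw [hN, Finset.card_sdiff_of_subset (Finset.subset_univ Q)]
      have : Fintype.card (ZMod p) = p := ZMod.card p
      rw [Finset.card_univ, this]
      omega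
    have hroots : N ⊆ (r.coeff j).roots.toFinset := by
      intro q hq
      have hqQ : q ∉ Q := (Finset.mem_sdiff.mp hq).2
      -- specialize the division identity at q
      have hMf : (mapRingHom (evalRingHom q)) f = ∏ P ∈ S, (X - C (P.1 - q * P.2)) := by
        rw [hf, map_prod]
        apply Finset.prod_congr rfl
        intro P _
        have hev : (evalRingHom q) (C P.1 - X * C P.2) = P.1 - q * P.2 := by
          simp only [map_sub, map_mul, coe_evalRingHom, eval_C, eval_X]
          try ring
        rw [coe_mapRingHom, Polynomial.map_sub, Polynomial.map_X, Polynomial.map_C, hev]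
      have hfq : (mapRingHom (evalRingHom q)) f ∣ X ^ p - X := by
        rw [hMf]; exact prod_lin_dvd S Q hQ q hqQ
      have hMd := congrArg (mapRingHom (evalRingHom q)) hdiv
      rw [hd, map_sub, map_add, map_mul, map_pow] at hMd
      rw [show (mapRingHom (evalRingHom q)) (X : (ZMod p)[X][X]) = (X : (ZMod p)[X]) by
        simp [coe_mapRingHom, Polynomial.map_X]] at hMd
      have hdvdr : (mapRingHom (evalRingHom q)) f ∣ (mapRingHom (evalRingHom q)) r := by
        have : (mapRingHom (evalRingHom q)) r
            = (X ^ p - X) - (mapRingHom (evalRingHom q)) f * (mapRingHom (evalRingHom q)) g := by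
          rw [hMd]; ring
        rw [this]
        exact dvd_sub hfq (Dvd.intro _ rfl)
      have hMr0 : (mapRingHom (evalRingHom q)) r = 0 := by
        rcases eq_or_ne ((mapRingHom (evalRingHom q)) r) 0 with h | h
        · exact h
        exfalso
        have hle := natDegree_le_of_dvd hdvdr h
        have h1 : ((mapRingHom (evalRingHom q)) f).natDegree = n := by
          rw [coe_mapRingHom]; rw [hfm.natDegree_map]; exact hfdeg
        have h2 : ((mapRingHom (evalRingHom q)) r).natDegree ≤ r.natDegree := by
          rw [coe_mapRingHom]; exact natDegree_map_le
        omega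
      have : (r.coeff j).eval q = 0 := by
        have := congrArg (fun s => Polynomial.coeff s j) hMr0
        simpa [coe_mapRingHom, coeff_map] using this
      rw [Multiset.mem_toFinset, mem_roots']
      exact ⟨hne, this⟩
    have hchain : N.card ≤ (r.coeff j).natDegree := by
      refine le_trans (Finset.card_le_card hroots) ?_
      refine le_trans (Multiset.toFinset_card_le _) ?_
      exact_mod_cast card_roots' _
    have := hwr j hne
    omega
  -- specialize at q0 := -γ
  set h : (ZMod p)[X] := (mapRingHom (evalRingHom (-γ))) r with hh
  have hhdeg : h.natDegree ≤ t := by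
    rw [natDegree_le_iff_coeff_eq_zero]
    intro N hN
    rw [hh, coe_mapRingHom, coeff_map, hvanish N hN, map_zero]
  have hMf0 : (mapRingHom (evalRingHom (-γ))) f = ∏ P ∈ S, (X - C (c P)) := by
    rw [hf, map_prod]
    apply Finset.prod_congr rfl
    intro P _
    have hev : (evalRingHom (-γ)) (C P.1 - X * C P.2) = c P := by
      simp only [map_sub, map_mul, coe_evalRingHom, eval_C, eval_X, hc]
      ring
    rw [coe_mapRingHom, Polynomial.map_sub, Polynomial.map_X, Polynomial.map_C, hev]
  have hident : (X : (ZMod p)[X]) ^ p - X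
      = (∏ P ∈ S, (X - C (c P))) * (mapRingHom (evalRingHom (-γ))) g + h := by
    have hMd := congrArg (mapRingHom (evalRingHom (-γ))) hdiv
    rw [hd, map_sub, map_add, map_mul, map_pow] at hMd
    rw [show (mapRingHom (evalRingHom (-γ))) (X : (ZMod p)[X][X]) = (X : (ZMod p)[X]) by
      simp [coe_mapRingHom, Polynomial.map_X]] at hMd
    rw [hMd, hMf0, hh]
  set k : ZMod p → ℕ := fun δ => (S.filter (fun P => c P = δ)).card with hk
  have hk1 : ∀ δ ∈ Δ, 1 ≤ k δ := by
    intro δ hδ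
    rw [hΔ] at hδ
    obtain ⟨P, hP, hPδ⟩ := Finset.mem_image.mp hδ
    have hmem : P ∈ S.filter (fun P => c P = δ) := Finset.mem_filter.mpr ⟨hP, hPδ⟩
    exact Finset.card_pos.mpr ⟨P, hmem⟩
  have hkn : ∀ δ, k δ ≤ n := fun δ => le_trans (Finset.card_filter_le _ _) (le_of_eq hn.symm)
  have hsum : ∑ δ ∈ Δ, k δ = n := by
    rw [hn, hΔ]
    exact (Finset.card_eq_sum_card_fiberwise (fun P hP => Finset.mem_image_of_mem c hP)).symm
  have hsum1 : ∑ δ ∈ Δ, (k δ - 1) = t := by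
    have h2 : ∑ δ ∈ Δ, (k δ - 1) + ∑ δ ∈ Δ, 1 = ∑ δ ∈ Δ, k δ := by
      rw [← Finset.sum_add_distrib]
      apply Finset.sum_congr rfl
      intro δ hδ
      have := hk1 δ hδ
      omega
    rw [Finset.sum_const, smul_eq_mul, mul_one, hsum] at h2
    omega
  have hdvd2 : ∀ δ ∈ Δ, ((X : (ZMod p)[X]) - C δ) ^ (k δ) ∣ (X - C δ) + h := by
    intro δ hδ
    have hd1 : ((X : (ZMod p)[X]) - C δ) ^ (k δ) ∣ ∏ P ∈ S, (X - C (c P)) := by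
      have he : ∏ P ∈ S.filter (fun P => c P = δ), ((X : (ZMod p)[X]) - C (c P))
          = (X - C δ) ^ (k δ) := by
        rw [Finset.prod_congr rfl (fun P hP => by rw [(Finset.mem_filter.mp hP).2]),
          Finset.prod_const, hk]
      rw [← he]
      exact Finset.prod_dvd_prod_of_subset _ _ _ (Finset.filter_subset _ _)
    have hd2 : ((X : (ZMod p)[X]) - C δ) ^ (k δ) ∣ X ^ p - X - h := by
      have heq : (X : (ZMod p)[X]) ^ p - X - h
          = (∏ P ∈ S, (X - C (c P))) * (mapRingHom (evalRingHom (-γ))) g := by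
        rw [hident]; ring
      rw [heq]
      exact Dvd.dvd.mul_right hd1 _
    have hfrob : ((X : (ZMod p)[X]) - C δ) ^ p = X ^ p - C δ := by
      rw [sub_pow_char, ← C_pow, ZMod.pow_card]
    have heq2 : (X : (ZMod p)[X]) - C δ + h = (X - C δ) ^ p - (X ^ p - X - h) := by
      rw [hfrob]; ring
    rw [heq2]
    exact dvd_sub (pow_dvd_pow _ (le_of_lt (lt_of_le_of_lt (hkn δ) hnp))) hd2
  have hWdvd : ∀ δ ∈ Δ, ((X : (ZMod p)[X]) - C δ) ^ (k δ - 1) ∣ 1 + derivative h := by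
    intro δ hδ
    have hder := pow_sub_one_dvd_derivative (hdvd2 δ hδ)
    rwa [derivative_add, derivative_sub, derivative_X, derivative_C, sub_zero] at hder
  set W : (ZMod p)[X] := ∏ δ ∈ Δ, (X - C δ) ^ (k δ - 1) with hW
  have hWd : W ∣ 1 + derivative h := by
    rw [hW]
    apply Finset.prod_dvd_of_coprime
    · intro a ha b hb hab
      exact (Polynomial.pairwise_coprime_X_sub_C (Function.injective_id) hab).pow
    · exact fun δ hδ => hWdvd δ hδ
  have hWdeg : W.natDegree = t := by
    rw [hW, natDegree_prod _ _ (fun δ _ => pow_ne_zero _ (X_sub_C_ne_zero δ)),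
      Finset.sum_congr rfl (fun δ _ => by rw [natDegree_pow, natDegree_X_sub_C, mul_one])]
    exact hsum1
  have hder0 : 1 + derivative h = 0 := by
    by_contra hne
    have h1 := natDegree_le_of_dvd hWd hne
    have h2 : (1 + derivative h).natDegree ≤ t - 1 := by
      refine le_trans (natDegree_add_le _ _) ?_
      rw [natDegree_one]
      refine max_le (by omega) ?_
      have := natDegree_derivative_le h
      omega
    omega
  have hder : derivative h = -1 := by linear_combination hder0
  have hcoeff2 : ∀ j, 2 ≤ j → h.coeff j = 0 := by
    intro j hj
    rcases le_or_gt j t with hle | hgt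
    · have h0 : (derivative h).coeff (j-1) = 0 := by
        rw [hder, coeff_neg, coeff_one, if_neg (by omega : ¬ (j - 1 = 0)), neg_zero]
      rw [coeff_derivative] at h0
      have hj1 : j - 1 + 1 = j := by omega
      rw [hj1] at h0
      rcases mul_eq_zero.mp h0 with h' | h'
      · exact h'
      · exfalso
        have hcast : ((j : ℕ) : ZMod p) = 0 := by
          rw [show ((j : ℕ) : ZMod p) = ((j - 1 : ℕ) : ZMod p) + 1 by
            rw [← Nat.cast_add_one, hj1]]
          exact h'
        rw [ZMod.natCast_eq_zero_iff] at hcast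
        have := Nat.le_of_dvd (by omega) hcast
        omega
    · exact coeff_eq_zero_of_natDegree_lt (lt_of_le_of_lt hhdeg hgt)
  have hcoeff1 : h.coeff 1 = -1 := by
    have h0 : (derivative h).coeff 0 = -1 := by rw [hder]; simp
    rw [coeff_derivative] at h0
    simpa using h0
  have hconst : ∀ δ ∈ Δ, δ = h.coeff 0 := by
    intro δ hδ
    have hdv := hdvd2 δ hδ
    have hCC : (X : (ZMod p)[X]) - C δ + h = C (h.coeff 0 - δ) := by
      ext j
      match j with
      | 0 =>
          simp only [coeff_add, coeff_sub, coeff_X_zero, coeff_C]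
          norm_num
          ring
      | 1 =>
          simp only [coeff_add, coeff_sub, coeff_X_one, coeff_C, hcoeff1]
          norm_num
      | (j+2) =>
          rw [coeff_add, coeff_sub, coeff_C, coeff_C, if_neg (by omega : ¬ (j+2:ℕ) = 0),
            if_neg (by omega : ¬ (j+2:ℕ) = 0), coeff_X, if_neg (by omega : ¬ 1 = (j+2:ℕ)),
            hcoeff2 (j+2) (by omega)]
          ring
    rw [hCC] at hdv
    by_contra hne
    have hC0 : C (h.coeff 0 - δ) ≠ 0 := by
      rw [Ne, Polynomial.C_eq_zero, sub_eq_zero]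
      exact fun hx => hne hx.symm
    have hled := natDegree_le_of_dvd hdv hC0
    rw [natDegree_pow, natDegree_X_sub_C, mul_one, natDegree_C] at hled
    have := hk1 δ hδ
    omega
  obtain ⟨a, ha, b, hb, hab⟩ := Finset.one_lt_card.mp (show 1 < Δ.card by omega)
  exact hab ((hconst a ha).trans (hconst b hb).symm)

end SvD

/-- Sumsets versus directions: for a non-collinear set `S ⊆ 𝔽_p²` of `n < p`
points and `α ≠ 0`, the ratio set `Q` satisfies `|Q| ≥ |S| − |Δ_α| + 1`, where
`Δ_α = {α·a + b : (a,b) ∈ S}`. -/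
theorem sumsets_vs_directions (p : ℕ) [Fact p.Prime]
    (S : Finset (ZMod p × ZMod p)) (n : ℕ) (hn : S.card = n) (hnp : n < p)
    (α : ZMod p) (hα : α ≠ 0)
    (hncol : ¬ ∃ m β : ZMod p, ∀ P ∈ S, m * P.1 + β = P.2) :
    S.card - (S.image (fun P => α * P.1 + P.2)).card + 1 ≤
      Set.ncard {q : ZMod p | ∃ P ∈ S, ∃ P' ∈ S, P.2 ≠ P'.2 ∧
        q = (P.1 - P'.1) / (P.2 - P'.2)} := by
  classical
  set Qset : Set (ZMod p) := {q : ZMod p | ∃ P ∈ S, ∃ P' ∈ S, P.2 ≠ P'.2 ∧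
      q = (P.1 - P'.1) / (P.2 - P'.2)} with hQset
  have hfin : Qset.Finite := Set.toFinite _
  have hQcard : Qset.ncard = hfin.toFinset.card := Set.ncard_eq_toFinset_card _ hfin
  have hSne : S.Nonempty := by
    by_contra hne
    rw [Finset.not_nonempty_iff_eq_empty] at hne
    exact hncol ⟨0, 0, by simp [hne]⟩
  have hQmem : ∀ P ∈ S, ∀ P' ∈ S, P.2 ≠ P'.2 →
      (P.1 - P'.1) / (P.2 - P'.2) ∈ hfin.toFinset := by
    intro P hP P' hP' hne
    rw [Set.Finite.mem_toFinset]
    exact ⟨P, hP, P', hP', hne, rfl⟩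
  have himg : (S.image fun P => P.1 + α⁻¹ * P.2).card
      = (S.image fun P => α * P.1 + P.2).card := by
    have himg2 : (S.image fun P => P.1 + α⁻¹ * P.2)
        = (S.image fun P => α * P.1 + P.2).image (fun y => α⁻¹ * y) := by
      rw [Finset.image_image]
      apply Finset.image_congr
      intro P _
      show P.1 + α⁻¹ * P.2 = α⁻¹ * (α * P.1 + P.2)
      field_simp
    rw [himg2, Finset.card_image_of_injective _ (mul_right_injective₀ (inv_ne_zero hα))]
  have hm2 : 2 ≤ (S.image fun P => P.1 + α⁻¹ * P.2).card := by
    by_contra hle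
    push_neg at hle
    have hpos : 0 < (S.image fun P => P.1 + α⁻¹ * P.2).card :=
      Finset.card_pos.mpr (hSne.image _)
    have hcard1 : (S.image fun P => P.1 + α⁻¹ * P.2).card = 1 := by omega
    obtain ⟨δ, hδ⟩ := Finset.card_eq_one.mp hcard1
    apply hncol
    refine ⟨-α, α * δ, fun P hP => ?_⟩
    have hP' : P.1 + α⁻¹ * P.2 = δ := by
      have : P.1 + α⁻¹ * P.2 ∈ (S.image fun P => P.1 + α⁻¹ * P.2) :=
        Finset.mem_image_of_mem _ hP
      rw [hδ, Finset.mem_singleton] at this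
      exact this
    have h2 : α * P.1 + P.2 = α * δ := by
      have h3 := congrArg (fun y => α * y) hP'
      simpa [mul_add, ← mul_assoc, mul_inv_cancel₀ hα] using h3
    linear_combination -h2
  rcases le_or_gt S.card (S.image (fun P => α * P.1 + P.2)).card with hle | hlt
  · have h0 : S.card - (S.image (fun P => α * P.1 + P.2)).card = 0 :=
      Nat.sub_eq_zero_of_le hle
    rw [h0, zero_add]
    have hne : Qset.Nonempty := by
      have hex : ∃ P ∈ S, ∃ P' ∈ S, P.2 ≠ P'.2 := by
        by_contra hno
        push_neg at hno
        obtain ⟨P0, hP0⟩ := hSne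
        exact hncol ⟨0, P0.2, fun P hP => by
          rw [zero_mul, zero_add]; exact (hno P hP P0 hP0).symm⟩
      obtain ⟨P, hP, P', hP', hne2⟩ := hex
      exact ⟨(P.1 - P'.1) / (P.2 - P'.2), ⟨P, hP, P', hP', hne2, rfl⟩⟩
    have := (Set.ncard_pos (Set.toFinite _)).mpr hne
    omega
  · have hkey := SvD.key S (by omega) α⁻¹ hfin.toFinset hQmem hm2 (by omega)
    rw [himg] at hkey
    omega
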